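/- Let n ≥ 2 be an integer and let f : ℝ^{n−1} → ℝ be a C^∞ function which is algebraic, in the sense that there exists a polynomial P in n real variables, not identically zero, such that P(x₁,…,x_{n−1}, f(x₁,…,x_{n−1})) = 0 for every (x₁,…,x_{n−1}) ∈ ℝ^{n−1}. Then there exists a polynomial Q in n−1 real variables, not identically zero, such that Q(x̄₁,…,x̄_{n−1}) = 0 for every point x̄ ∈ ℝ^{n−1} at which f(x̄) = 0 and the gradient ∇f(x̄) ≠ 0. -/

import Mathlib

/-- **Algebraic function lemma** (Section 4.1).  Let `n ≥ 2` and let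
`f : ℝ^{n-1} → ℝ` be a `C^∞` algebraic function, i.e. there is a nonzero
polynomial `P` in `n` variables with `P(x, f x) = 0` for all `x`.  Then there
is a nonzero polynomial `Q` in `n - 1` variables vanishing at every
non-degenerate zero of `f`. -/
theorem algebraic_function_nondegenerate_zero
    (n : ℕ) (hn : 2 ≤ n)
    (f : (Fin (n - 1) → ℝ) → ℝ) (hf : ContDiff ℝ (⊤ : ℕ∞) f)
    (P : MvPolynomial (Fin n) ℝ) (hP : P ≠ 0)
    (hPf : ∀ x : Fin (n - 1) → ℝ,
      MvPolynomial.eval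
        (fun i : Fin n => if h : (i : ℕ) < n - 1 then x ⟨i, h⟩ else f x) P = 0) :
    ∃ Q : MvPolynomial (Fin (n - 1)) ℝ, Q ≠ 0 ∧
      ∀ x : Fin (n - 1) → ℝ, f x = 0 → fderiv ℝ f x ≠ 0 →
        MvPolynomial.eval x Q = 0 := by
  obtain ⟨m, rfl⟩ : ∃ m, n = m + 1 := ⟨n - 1, by omega⟩
  -- move the distinguished variable to position 0
  set P₂ : MvPolynomial (Fin (m + 1)) ℝ :=
    MvPolynomial.rename (finRotate (m + 1)) P with hP₂def
  have hP₂ : P₂ ≠ 0 := fun h => hP <|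
    (MvPolynomial.rename_injective _ (finRotate (m + 1)).injective)
      (by simpa using h)
  have hP₂f : ∀ x : Fin m → ℝ,
      MvPolynomial.eval (Fin.cons (f x) x : Fin (m + 1) → ℝ) P₂ = 0 := by
    intro x
    rw [hP₂def, MvPolynomial.eval_rename]
    have heq : (Fin.cons (f x) x ∘ (finRotate (m + 1)) : Fin (m + 1) → ℝ) =
        fun i : Fin (m + 1) => if h : (i : ℕ) < m + 1 - 1 then x ⟨(i : ℕ), h⟩ else f x := by
      funext i
      simp only [Function.comp_apply]
      by_cases h : (i : ℕ) < m
      · rw [dif_pos (show (i : ℕ) < m + 1 - 1 from h)]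
        have : finRotate (m + 1) i = Fin.succ ⟨(i : ℕ), h⟩ := by
          rw [finRotate_succ_apply]
          ext
          simp [Fin.add_def, Nat.mod_eq_of_lt (by omega : (i : ℕ) + 1 < m + 1)]
        rw [this, Fin.cons_succ]
      · rw [dif_neg (show ¬ (i : ℕ) < m + 1 - 1 from h)]
        have hi : i = Fin.last m := by
          have := i.isLt
          ext
          simp only [Fin.val_last]
          omega
        rw [hi, finRotate_last]
        simp
    rw [heq]
    exact hPf x
  set p : Polynomial (MvPolynomial (Fin m) ℝ) := MvPolynomial.finSuccEquiv ℝ m P₂ with hpdef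
  have hp : p ≠ 0 := by
    intro h
    rw [hpdef] at h
    exact hP₂ ((MvPolynomial.finSuccEquiv ℝ m).injective (h.trans (map_zero _).symm))
  obtain ⟨q, hpq, hqdvd⟩ := p.exists_eq_pow_rootMultiplicity_mul_and_not_dvd hp 0
  rw [Polynomial.C_0, sub_zero] at hpq hqdvd
  set k := p.rootMultiplicity 0
  have hq0 : q.coeff 0 ≠ 0 := fun h => hqdvd (Polynomial.X_dvd_iff.2 h)
  refine ⟨q.coeff 0, hq0, ?_⟩
  intro x hfx hdf
  -- the auxiliary continuous function
  set g : (Fin m → ℝ) → ℝ :=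
    fun y => Polynomial.eval (f y) (Polynomial.map (MvPolynomial.eval y) q) with hgdef
  have hgcont : Continuous g := by
    have : g = fun y => ∑ i ∈ Finset.range (q.natDegree + 1),
        MvPolynomial.eval y (q.coeff i) * (f y) ^ i := by
      funext y
      show Polynomial.eval (f y) (Polynomial.map (MvPolynomial.eval y) q) = _
      rw [Polynomial.eval_map, Polynomial.eval₂_eq_sum_range]
    rw [this]
    exact continuous_finset_sum _ fun i _ =>
      (MvPolynomial.continuous_eval _).mul ((hf.continuous).pow i)
  -- g vanishes where f ≠ 0
  have hgzero : ∀ y, f y ≠ 0 → g y = 0 := by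
    intro y hy
    have h0 := hP₂f y
    rw [MvPolynomial.eval_eq_eval_mv_eval', ← hpdef, hpq] at h0
    rw [Polynomial.map_mul, Polynomial.map_pow, Polynomial.map_X, Polynomial.eval_mul,
      Polynomial.eval_pow, Polynomial.eval_X] at h0
    rcases mul_eq_zero.1 h0 with h | h
    · exact absurd h (pow_ne_zero _ hy)
    · exact h
  -- x is in the closure of {f ≠ 0}
  have hclos : x ∈ closure {y | f y ≠ 0} := by
    by_contra hx
    have : ∀ᶠ y in nhds x, f y = 0 := by
      have : {y | f y ≠ 0}ᶜ ∈ nhds x := by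
        rw [mem_nhds_iff]
        exact ⟨(closure {y | f y ≠ 0})ᶜ, fun y hy =>
          fun h => hy (subset_closure h), isClosed_closure.isOpen_compl, hx⟩
      filter_upwards [this] with y hy
      simpa using hy
    have : fderiv ℝ f x = fderiv ℝ (fun _ => (0 : ℝ)) x :=
      Filter.EventuallyEq.fderiv_eq this
    rw [fderiv_fun_const] at this
    exact hdf (by simpa using this)
  -- conclude by continuity
  have hgx : g x = 0 := by
    have := Set.EqOn.closure (s := {y | f y ≠ 0}) (fun y hy => hgzero y hy)
      hgcont continuous_const hclos
    simpa using this
  rw [hgdef] at hgx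
  simp only [hfx] at hgx
  rw [Polynomial.eval_zero_map, ← Polynomial.coeff_zero_eq_eval_zero] at hgx
  exact hgx
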